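/- There exists ε₀ > 0 such that for all 0 < ε ≤ ε₀: if λ ∈ [0,∞), ν is a nonnegative integer, and u(r,θ) = u^r(r)cos(νθ) is a nonzero C² solution of D_ε u = λu on the closed unit disc, and u_O^r denotes the restriction of u^r to [1−ε, 1], then J_ν(√(8λ)·(1−ε))·(u_O^r)'(1−ε) − √(8λ)·J_ν'(√(8λ)·(1−ε))·u_O^r(1−ε) = 0, where J_ν is the Bessel function of the first kind of order ν, defined for ν ∈ ℕ₀ by the convergent series J_ν(x) = Σ_{k=0}^∞ (−1)^k/(k!·(k+ν)!)·(x/2)^(2k+ν). -/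

import Mathlib

open Real Set Filter Topology MeasureTheory

noncomputable def s0 (ε t : ℝ) : ℝ :=
  if 0 ≤ t ∧ t ≤ ε then π/2 + (t/ε) * Real.sqrt (1 - (t/ε)^2) + Real.arcsin (t/ε) else π

noncomputable def s12 (ε t : ℝ) : ℝ :=
  if 0 ≤ t ∧ t ≤ ε then -(2/3) * (1 - (t/ε)^2) ^ ((3:ℝ)/2) else 0

noncomputable def s2 (ε t : ℝ) : ℝ :=
  if 0 ≤ t ∧ t ≤ ε then
    π/8 + (1/12) * ((t/ε) * Real.sqrt (1 - (t/ε)^2) * (5 - 2*(t/ε)^2) + 3 * Real.arcsin (t/ε))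
  else π/4

noncomputable def s22 (ε t : ℝ) : ℝ :=
  if 0 ≤ t ∧ t ≤ ε then
    π/8 + (1/4) * ((t/ε) * Real.sqrt (1 - (t/ε)^2) * (2*(t/ε)^2 - 1) + Real.arcsin (t/ε))
  else π/4

noncomputable def s3 (ε t : ℝ) : ℝ :=
  if 0 ≤ t ∧ t ≤ ε then -(2/15) * (1 - (t/ε)^2) ^ ((5:ℝ)/2) else 0

noncomputable def s32 (ε t : ℝ) : ℝ :=
  if 0 ≤ t ∧ t ≤ ε then -(2/15) * (2 + 3*(t/ε)^2) * (1 - (t/ε)^2) ^ ((3:ℝ)/2) else 0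

noncomputable def phi11 (ε t : ℝ) : ℝ :=
  (1/2) * (s22 ε t * s2 ε t - s3 ε t * s12 ε t) / ((s12 ε t)^2 - s22 ε t * s0 ε t)

noncomputable def phi22 (ε t : ℝ) : ℝ :=
  (1/2) * ((s22 ε t)^2 - s32 ε t * s12 ε t) / ((s12 ε t)^2 - s22 ε t * s0 ε t)

noncomputable def phi2d (ε t : ℝ) : ℝ :=
  s12 ε t / ((s12 ε t)^2 - s22 ε t * s0 ε t)

/-- The principal Sturm–Liouville coefficient on the disc, as a function of the
radius `r`; this is `p(1−r)` in the paper's notation. -/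
noncomputable def pd (ε r0 r : ℝ) : ℝ :=
  (1/8) * (1 - ε) * Real.sign (1 - r0 - r) *
    Real.exp (∫ s in (1-ε)..r, (phi11 ε (1-s) + s * phi2d ε (1-s)) / (s * phi22 ε (1-s)))

/-- `q(1−r)` as a function of `r`. -/
noncomputable def qd (ε r0 r : ℝ) : ℝ :=
  -(pd ε r0 r / r^2) * (phi11 ε (1-r) / phi22 ε (1-r))

/-- The weight `w(1−r)` as a function of `r`. -/
noncomputable def wd (ε r0 r : ℝ) : ℝ := -pd ε r0 r / phi22 ε (1-r)

/-- The point of the plane (seen as `ℂ`) with polar coordinates `(r, θ)`. -/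
noncomputable def pol (r θ : ℝ) : ℂ := (r : ℂ) * Complex.exp ((θ : ℂ) * Complex.I)

/-- Radial partial derivative of `F` at `(r, θ)`. -/
noncomputable def Fr (F : ℂ → ℝ) (r θ : ℝ) : ℝ := deriv (fun t : ℝ => F (pol t θ)) r

/-- Second radial partial derivative of `F` at `(r, θ)`. -/
noncomputable def Frr (F : ℂ → ℝ) (r θ : ℝ) : ℝ :=
  deriv (deriv (fun t : ℝ => F (pol t θ))) r

/-- Second angular partial derivative of `F` at `(r, θ)`. -/
noncomputable def Ftt (F : ℂ → ℝ) (r θ : ℝ) : ℝ :=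
  deriv (deriv (fun s : ℝ => F (pol r s))) θ

/-- `F` is a `C²` function on the closed unit disc satisfying `D_ε F = λ F`
everywhere (expressed in polar coordinates). -/
def IsDiscSol (ε lam : ℝ) (F : ℂ → ℝ) : Prop :=
  ContDiffOn ℝ 2 F (Metric.closedBall 0 1) ∧
  ∀ r ∈ Ioc (0:ℝ) 1, ∀ θ : ℝ,
    phi11 ε (1-r) * ((1/r) * Fr F r θ + (1/r^2) * Ftt F r θ) +
      phi22 ε (1-r) * Frr F r θ + phi2d ε (1-r) * Fr F r θ = lam * F (pol r θ)

/-- The Bessel function of the first kind of (natural) order `ν`, defined by its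
power series. -/
noncomputable def besselJ (ν : ℕ) (x : ℝ) : ℝ :=
  ∑' k : ℕ, ((-1:ℝ)^k / ((k.factorial : ℝ) * ((k+ν).factorial : ℝ))) * (x/2)^(2*k+ν)

namespace BesselAux

/-- coefficient -/
noncomputable def bc (ν k : ℕ) : ℝ :=
  (-1:ℝ)^k / ((k.factorial : ℝ) * ((k+ν).factorial : ℝ) * 2^(2*k+ν))

lemma besselJ_eq (ν : ℕ) (x : ℝ) : besselJ ν x = ∑' k, bc ν k * x^(2*k+ν) := by
  unfold besselJ bc
  congr 1; funext k
  rw [div_pow]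
  have h1 : (k.factorial : ℝ) ≠ 0 := Nat.cast_ne_zero.2 k.factorial_ne_zero
  have h2 : ((k+ν).factorial : ℝ) ≠ 0 := Nat.cast_ne_zero.2 (k+ν).factorial_ne_zero
  have h3 : (2:ℝ)^(2*k+ν) ≠ 0 := by positivity
  field_simp

lemma abs_bc_le (ν k : ℕ) : |bc ν k| ≤ 1 / k.factorial := by
  unfold bc
  rw [abs_div, abs_pow, abs_neg, abs_one, one_pow]
  have h1 : (1:ℝ) ≤ ((k+ν).factorial : ℝ) := by exact_mod_cast (k+ν).factorial_pos
  have h2 : (1:ℝ) ≤ (2:ℝ)^(2*k+ν) := one_le_pow₀ (by norm_num)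
  have h0 : (0:ℝ) < k.factorial := by exact_mod_cast k.factorial_pos
  rw [abs_of_pos (by positivity)]
  apply div_le_div_of_nonneg_left (by norm_num) h0
  calc (k.factorial:ℝ) = k.factorial * 1 * 1 := by ring
  _ ≤ (k.factorial:ℝ) * (k+ν).factorial * 2^(2*k+ν) := by
      apply mul_le_mul _ h2 (by norm_num) (by positivity)
      exact mul_le_mul_of_nonneg_left h1 h0.le

/-- the dominating sequence -/
noncomputable def dom (ν : ℕ) (R : ℝ) (k : ℕ) : ℝ :=
  (2*(k:ℝ)+ν+2)^2 / k.factorial * R^(2*k+ν)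

lemma sq_le_pow (ν k : ℕ) : (2*(k:ℝ)+ν+2)^2 ≤ ((ν:ℝ)+2)^2 * 4^k := by
  induction k with
  | zero => simp
  | succ n ih =>
    have h : (2*((n:ℝ)+1)+ν+2)^2 ≤ 4 * (2*(n:ℝ)+ν+2)^2 := by nlinarith [Nat.cast_nonneg (α := ℝ) n, Nat.cast_nonneg (α := ℝ) ν]
    calc (2*((n+1:ℕ):ℝ)+ν+2)^2 = (2*((n:ℝ)+1)+ν+2)^2 := by push_cast; ring
    _ ≤ 4 * (2*(n:ℝ)+ν+2)^2 := h
    _ ≤ 4 * (((ν:ℝ)+2)^2 * 4^n) := by nlinarith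
    _ = ((ν:ℝ)+2)^2 * 4^(n+1) := by ring

lemma dom_le (ν : ℕ) {R : ℝ} (hR : 1 ≤ R) (k : ℕ) :
    dom ν R k ≤ (((ν:ℝ)+2)^2 * R^ν) * ((4*R^2)^k / k.factorial) := by
  have hR0 : (0:ℝ) < R := lt_of_lt_of_le one_pos hR
  have hf : (0:ℝ) < k.factorial := by exact_mod_cast k.factorial_pos
  have key : (2*(k:ℝ)+ν+2)^2 * R^(2*k+ν) ≤ (((ν:ℝ)+2)^2 * R^ν) * (4*R^2)^k := by
    have hpow : R^(2*k+ν) = (R^2)^k * R^ν := by rw [pow_add, pow_mul]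
    rw [hpow, mul_pow]
    calc (2*(k:ℝ)+ν+2)^2 * ((R^2)^k * R^ν)
        ≤ (((ν:ℝ)+2)^2 * 4^k) * ((R^2)^k * R^ν) := by
          apply mul_le_mul_of_nonneg_right (sq_le_pow ν k) (by positivity)
      _ = (((ν:ℝ)+2)^2 * R^ν) * (4^k * (R^2)^k) := by ring
  calc dom ν R k = (2*(k:ℝ)+ν+2)^2 * R^(2*k+ν) / k.factorial := by
        unfold dom; ring
    _ ≤ (((ν:ℝ)+2)^2 * R^ν) * (4*R^2)^k / k.factorial := by
        gcongr
    _ = (((ν:ℝ)+2)^2 * R^ν) * ((4*R^2)^k / k.factorial) := by ring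

lemma summable_dom (ν : ℕ) {R : ℝ} (hR : 1 ≤ R) : Summable (dom ν R) := by
  apply Summable.of_nonneg_of_le (fun k => by unfold dom; positivity) (dom_le ν hR)
  exact (Real.summable_pow_div_factorial (4*R^2)).mul_left _

/-- first derivative series -/
noncomputable def J1 (ν : ℕ) (x : ℝ) : ℝ :=
  ∑' k, bc ν k * (((2*k+ν : ℕ) : ℝ) * x^(2*k+ν-1))

/-- second derivative series -/
noncomputable def J2 (ν : ℕ) (x : ℝ) : ℝ :=
  ∑' k, bc ν k * (((2*k+ν : ℕ) : ℝ) * (((2*k+ν-1 : ℕ) : ℝ) * x^(2*k+ν-1-1)))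

lemma bound0 (ν : ℕ) {R y : ℝ} (hR : 1 ≤ R) (hy : |y| ≤ R) (k : ℕ) :
    ‖bc ν k * y^(2*k+ν)‖ ≤ dom ν R k := by
  have hf : (0:ℝ) < k.factorial := by exact_mod_cast k.factorial_pos
  have hR0 : (0:ℝ) ≤ R := le_trans zero_le_one hR
  have h1 : |y|^(2*k+ν) ≤ R^(2*k+ν) := pow_le_pow_left₀ (abs_nonneg y) hy _
  calc ‖bc ν k * y^(2*k+ν)‖ = |bc ν k| * |y|^(2*k+ν) := by
        rw [norm_mul, Real.norm_eq_abs, Real.norm_eq_abs, abs_pow]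
    _ ≤ (1/k.factorial) * R^(2*k+ν) := by
        apply mul_le_mul (abs_bc_le ν k) h1 (by positivity) (by positivity)
    _ ≤ dom ν R k := by
        unfold dom
        apply mul_le_mul_of_nonneg_right _ (by positivity)
        rw [div_le_div_iff₀ hf hf]
        have h4 : (1:ℝ) ≤ (2*(k:ℝ)+ν+2)^2 := by
          nlinarith [Nat.cast_nonneg (α := ℝ) k, Nat.cast_nonneg (α := ℝ) ν]
        nlinarith [h4, hf]

lemma pow_sub_le {R y : ℝ} (hR : 1 ≤ R) (hy : |y| ≤ R) (m j : ℕ) :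
    |y|^(m-j) ≤ R^m := by
  have h1 : |y|^(m-j) ≤ R^(m-j) := pow_le_pow_left₀ (abs_nonneg y) hy _
  exact le_trans h1 (pow_le_pow_right₀ hR (Nat.sub_le m j))

lemma bound1 (ν : ℕ) {R y : ℝ} (hR : 1 ≤ R) (hy : |y| ≤ R) (k : ℕ) :
    ‖bc ν k * (((2*k+ν : ℕ) : ℝ) * y^(2*k+ν-1))‖ ≤ dom ν R k := by
  have hf : (0:ℝ) < k.factorial := by exact_mod_cast k.factorial_pos
  have h1 : |y|^(2*k+ν-1) ≤ R^(2*k+ν) := pow_sub_le hR hy _ 1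
  have hm : ((2*k+ν : ℕ) : ℝ) ≤ (2*(k:ℝ)+ν+2)^2 := by
    push_cast
    nlinarith [Nat.cast_nonneg (α := ℝ) k, Nat.cast_nonneg (α := ℝ) ν]
  calc ‖bc ν k * (((2*k+ν : ℕ) : ℝ) * y^(2*k+ν-1))‖
      = |bc ν k| * (((2*k+ν : ℕ) : ℝ) * |y|^(2*k+ν-1)) := by
        simp only [Real.norm_eq_abs, abs_mul, abs_pow, Nat.abs_cast]
    _ ≤ (1/k.factorial) * ((2*(k:ℝ)+ν+2)^2 * R^(2*k+ν)) := by
        apply mul_le_mul (abs_bc_le ν k) _ (by positivity) (by positivity)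
        apply mul_le_mul hm h1 (by positivity) (by positivity)
    _ = dom ν R k := by unfold dom; ring

lemma bound2 (ν : ℕ) {R y : ℝ} (hR : 1 ≤ R) (hy : |y| ≤ R) (k : ℕ) :
    ‖bc ν k * (((2*k+ν : ℕ) : ℝ) * (((2*k+ν-1 : ℕ) : ℝ) * y^(2*k+ν-1-1)))‖ ≤ dom ν R k := by
  have hf : (0:ℝ) < k.factorial := by exact_mod_cast k.factorial_pos
  have h1 : |y|^(2*k+ν-1-1) ≤ R^(2*k+ν) := by
    have he : 2*k+ν-1-1 = 2*k+ν-2 := by omega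
    rw [he]; exact pow_sub_le hR hy _ 2
  have hm : ((2*k+ν : ℕ) : ℝ) * ((2*k+ν-1 : ℕ) : ℝ) ≤ (2*(k:ℝ)+ν+2)^2 := by
    have h2 : ((2*k+ν-1 : ℕ) : ℝ) ≤ ((2*k+ν : ℕ) : ℝ) := by
      exact_mod_cast Nat.sub_le _ _
    have h3 : ((2*k+ν : ℕ) : ℝ) ≤ 2*(k:ℝ)+ν+2 := by push_cast; linarith
    nlinarith [Nat.cast_nonneg (α := ℝ) (2*k+ν), Nat.cast_nonneg (α := ℝ) (2*k+ν-1)]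
  calc ‖bc ν k * (((2*k+ν : ℕ) : ℝ) * (((2*k+ν-1 : ℕ) : ℝ) * y^(2*k+ν-1-1)))‖
      = |bc ν k| * ((((2*k+ν : ℕ) : ℝ) * ((2*k+ν-1 : ℕ) : ℝ)) * |y|^(2*k+ν-1-1)) := by
        simp only [Real.norm_eq_abs, abs_mul, abs_pow, Nat.abs_cast]
        ring
    _ ≤ (1/k.factorial) * ((2*(k:ℝ)+ν+2)^2 * R^(2*k+ν)) := by
        apply mul_le_mul (abs_bc_le ν k) _ (by positivity) (by positivity)
        apply mul_le_mul hm h1 (by positivity) (by positivity)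
    _ = dom ν R k := by unfold dom; ring

lemma summable0 (ν : ℕ) (x : ℝ) : Summable (fun k => bc ν k * x^(2*k+ν)) := by
  have hR : (1:ℝ) ≤ |x| + 1 := by linarith [abs_nonneg x]
  exact (summable_dom ν hR).of_norm_bounded (bound0 ν hR (by linarith [abs_nonneg x]))

lemma hasSum0 (ν : ℕ) (x : ℝ) : HasSum (fun k => bc ν k * x^(2*k+ν)) (besselJ ν x) := by
  rw [besselJ_eq]; exact (summable0 ν x).hasSum

lemma summable1 (ν : ℕ) (x : ℝ) :
    Summable (fun k => bc ν k * (((2*k+ν : ℕ) : ℝ) * x^(2*k+ν-1))) := by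
  have hR : (1:ℝ) ≤ |x| + 1 := by linarith [abs_nonneg x]
  exact (summable_dom ν hR).of_norm_bounded (bound1 ν hR (by linarith [abs_nonneg x]))

lemma hasSum1 (ν : ℕ) (x : ℝ) :
    HasSum (fun k => bc ν k * (((2*k+ν : ℕ) : ℝ) * x^(2*k+ν-1))) (J1 ν x) :=
  (summable1 ν x).hasSum

lemma summable2 (ν : ℕ) (x : ℝ) :
    Summable (fun k => bc ν k * (((2*k+ν : ℕ) : ℝ) * (((2*k+ν-1 : ℕ) : ℝ) * x^(2*k+ν-1-1)))) := by
  have hR : (1:ℝ) ≤ |x| + 1 := by linarith [abs_nonneg x]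
  exact (summable_dom ν hR).of_norm_bounded (bound2 ν hR (by linarith [abs_nonneg x]))

lemma hasSum2 (ν : ℕ) (x : ℝ) :
    HasSum (fun k => bc ν k * (((2*k+ν : ℕ) : ℝ) * (((2*k+ν-1 : ℕ) : ℝ) * x^(2*k+ν-1-1)))) (J2 ν x) :=
  (summable2 ν x).hasSum

lemma besselJ_hasDerivAt (ν : ℕ) (x : ℝ) : HasDerivAt (besselJ ν) (J1 ν x) x := by
  have hR : (1:ℝ) ≤ |x| + 1 := by linarith [abs_nonneg x]
  set R := |x| + 1 with hRdef
  have hmem : x ∈ Metric.ball (0:ℝ) R := by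
    simp [Real.norm_eq_abs, hRdef]
  have hfun : besselJ ν = fun z => ∑' k, bc ν k * z^(2*k+ν) := funext (besselJ_eq ν)
  rw [hfun]
  have := hasDerivAt_tsum_of_isPreconnected (summable_dom ν hR) Metric.isOpen_ball
    (convex_ball (0:ℝ) R).isPreconnected
    (g := fun k y => bc ν k * y^(2*k+ν))
    (g' := fun k y => bc ν k * (((2*k+ν : ℕ) : ℝ) * y^(2*k+ν-1)))
    (fun k y _ => (hasDerivAt_pow (2*k+ν) y).const_mul (bc ν k))
    (fun k y hy => bound1 ν hR (by simpa [Real.norm_eq_abs] using (Metric.mem_ball.1 hy).le) k)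
    hmem (summable0 ν x) hmem
  exact this

lemma J1_hasDerivAt (ν : ℕ) (x : ℝ) : HasDerivAt (J1 ν) (J2 ν x) x := by
  have hR : (1:ℝ) ≤ |x| + 1 := by linarith [abs_nonneg x]
  set R := |x| + 1 with hRdef
  have hmem : x ∈ Metric.ball (0:ℝ) R := by
    simp [Real.norm_eq_abs, hRdef]
  have hderiv : ∀ (k : ℕ) (y : ℝ),
      HasDerivAt (fun z => bc ν k * (((2*k+ν : ℕ) : ℝ) * z^(2*k+ν-1)))
        (bc ν k * (((2*k+ν : ℕ) : ℝ) * (((2*k+ν-1 : ℕ) : ℝ) * y^(2*k+ν-1-1)))) y := by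
    intro k y
    exact ((hasDerivAt_pow (2*k+ν-1) y).const_mul (((2*k+ν : ℕ) : ℝ))).const_mul (bc ν k)
  have hfun : J1 ν = fun z => ∑' k, bc ν k * (((2*k+ν : ℕ) : ℝ) * z^(2*k+ν-1)) := rfl
  rw [hfun]
  exact hasDerivAt_tsum_of_isPreconnected (summable_dom ν hR) Metric.isOpen_ball
    (convex_ball (0:ℝ) R).isPreconnected
    (fun k y _ => hderiv k y)
    (fun k y hy => bound2 ν hR (by simpa [Real.norm_eq_abs] using (Metric.mem_ball.1 hy).le) k)
    hmem (summable1 ν x) hmem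

lemma deriv_besselJ (ν : ℕ) : deriv (besselJ ν) = J1 ν :=
  funext fun x => (besselJ_hasDerivAt ν x).deriv


lemma bc_rec (ν k : ℕ) :
    bc ν (k+1) * (4*((k:ℝ)+1)*((k:ℝ)+1+ν)) = - bc ν k := by
  unfold bc
  have e1 : (k+1).factorial = (k+1) * k.factorial := Nat.factorial_succ k
  have e2 : (k+1+ν).factorial = (k+1+ν) * (k+ν).factorial := by
    rw [show k+1+ν = (k+ν)+1 by ring, Nat.factorial_succ]
  have e3 : (2:ℝ)^(2*(k+1)+ν) = 4 * 2^(2*k+ν) := by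
    rw [show 2*(k+1)+ν = (2*k+ν)+2 by ring, pow_add]; ring
  rw [e1, e2, e3]
  have h1 : (k.factorial : ℝ) ≠ 0 := Nat.cast_ne_zero.2 k.factorial_ne_zero
  have h2 : ((k+ν).factorial : ℝ) ≠ 0 := Nat.cast_ne_zero.2 (k+ν).factorial_ne_zero
  have h3 : (2:ℝ)^(2*k+ν) ≠ 0 := by positivity
  push_cast
  field_simp
  ring

lemma combo_succ (ν k : ℕ) (x : ℝ) :
    x^2 * (bc ν (k+1) * (((2*(k+1)+ν : ℕ) : ℝ) * (((2*(k+1)+ν-1 : ℕ) : ℝ) * x^(2*(k+1)+ν-1-1))))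
      + x * (bc ν (k+1) * (((2*(k+1)+ν : ℕ) : ℝ) * x^(2*(k+1)+ν-1)))
      + (x^2 - (ν:ℝ)^2) * (bc ν (k+1) * x^(2*(k+1)+ν))
    = bc ν (k+1) * x^(2*(k+1)+ν+2) - bc ν k * x^(2*k+ν+2) := by
  have h2 : 2*(k+1)+ν-1-1 = 2*k+ν := by omega
  have h1 : 2*(k+1)+ν-1 = 2*k+ν+1 := by omega
  have h0 : 2*(k+1)+ν = 2*k+ν+2 := by omega
  rw [h2, h1, h0]
  have e1 : x^(2*k+ν+1) = x^(2*k+ν) * x := pow_succ x _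
  have e2 : x^(2*k+ν+2) = x^(2*k+ν) * x^2 := by rw [pow_add]
  have e3 : x^(2*k+ν+2+2) = x^(2*k+ν) * x^2 * x^2 := by rw [pow_add, pow_add]
  rw [e3, e2, e1]
  push_cast
  linear_combination (x^(2*k+ν) * x^2) * bc_rec ν k

lemma combo_zero (ν : ℕ) (x : ℝ) :
    x^2 * (bc ν 0 * (((2*0+ν : ℕ) : ℝ) * (((2*0+ν-1 : ℕ) : ℝ) * x^(2*0+ν-1-1))))
      + x * (bc ν 0 * (((2*0+ν : ℕ) : ℝ) * x^(2*0+ν-1)))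
      + (x^2 - (ν:ℝ)^2) * (bc ν 0 * x^(2*0+ν))
    = bc ν 0 * x^(2*0+ν+2) := by
  match ν with
  | 0 => norm_num; ring
  | 1 => norm_num; ring
  | (n+2) =>
    have h2 : 2*0+(n+2)-1-1 = n := by omega
    have h1 : 2*0+(n+2)-1 = n+1 := by omega
    have h0 : 2*0+(n+2) = n+2 := by omega
    rw [h2, h1, h0]
    have e1 : x^(n+1) = x^n * x := pow_succ x _
    have e2 : x^(n+2) = x^n * x^2 := by rw [pow_add]
    have e3 : x^(n+2+2) = x^n * x^2 * x^2 := by rw [pow_add, pow_add]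
    rw [e3, e2, e1]
    push_cast
    ring

lemma sum_combo (ν : ℕ) (x : ℝ) (K : ℕ) :
    ∑ k ∈ Finset.range (K+1),
      (x^2 * (bc ν k * (((2*k+ν : ℕ) : ℝ) * (((2*k+ν-1 : ℕ) : ℝ) * x^(2*k+ν-1-1))))
        + x * (bc ν k * (((2*k+ν : ℕ) : ℝ) * x^(2*k+ν-1)))
        + (x^2 - (ν:ℝ)^2) * (bc ν k * x^(2*k+ν)))
    = bc ν K * x^(2*K+ν+2) := by
  induction K with
  | zero => simpa using combo_zero ν x
  | succ n ih =>
    rw [Finset.sum_range_succ, ih, combo_succ ν n x]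
    ring

lemma besselJ_ode (ν : ℕ) (x : ℝ) :
    x^2 * J2 ν x + x * J1 ν x + (x^2 - (ν:ℝ)^2) * besselJ ν x = 0 := by
  have H : HasSum
      (fun k => x^2 * (bc ν k * (((2*k+ν : ℕ) : ℝ) * (((2*k+ν-1 : ℕ) : ℝ) * x^(2*k+ν-1-1))))
        + x * (bc ν k * (((2*k+ν : ℕ) : ℝ) * x^(2*k+ν-1)))
        + (x^2 - (ν:ℝ)^2) * (bc ν k * x^(2*k+ν)))
      (x^2 * J2 ν x + x * J1 ν x + (x^2 - (ν:ℝ)^2) * besselJ ν x) := by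
    exact (((hasSum2 ν x).mul_left (x^2)).add ((hasSum1 ν x).mul_left x)).add
      ((hasSum0 ν x).mul_left (x^2 - (ν:ℝ)^2))
  have hT := H.tendsto_sum_nat
  have hT2 := hT.comp (tendsto_add_atTop_nat 1)
  have heq : ((fun n => ∑ k ∈ Finset.range n,
      (x^2 * (bc ν k * (((2*k+ν : ℕ) : ℝ) * (((2*k+ν-1 : ℕ) : ℝ) * x^(2*k+ν-1-1))))
        + x * (bc ν k * (((2*k+ν : ℕ) : ℝ) * x^(2*k+ν-1)))
        + (x^2 - (ν:ℝ)^2) * (bc ν k * x^(2*k+ν)))) ∘ (fun n => n + 1))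
      = fun K => bc ν K * x^(2*K+ν+2) := by
    funext K
    exact sum_combo ν x K
  rw [heq] at hT2
  have hzero : Filter.Tendsto (fun K => bc ν K * x^(2*K+ν+2)) atTop (nhds 0) := by
    have hs : Summable (fun k => (bc ν k * x^(2*k+ν)) * x^2) := (summable0 ν x).mul_right (x^2)
    have he : (fun K => bc ν K * x^(2*K+ν+2)) = fun k => (bc ν k * x^(2*k+ν)) * x^2 := by
      funext k
      rw [pow_add]
      ring
    rw [he]
    exact hs.tendsto_atTop_zero
  exact tendsto_nhds_unique hT2 hzero

end BesselAux


section MainAux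

open BesselAux

lemma phi11_const {ε t : ℝ} (ht : ε < t) : phi11 ε t = -(1/8) := by
  have h : ¬(0 ≤ t ∧ t ≤ ε) := by rintro ⟨h1, h2⟩; linarith
  unfold phi11 s22 s2 s3 s12 s0
  rw [if_neg h, if_neg h, if_neg h, if_neg h, if_neg h]
  have hπ := Real.pi_ne_zero
  field_simp
  ring

lemma phi22_const {ε t : ℝ} (ht : ε < t) : phi22 ε t = -(1/8) := by
  have h : ¬(0 ≤ t ∧ t ≤ ε) := by rintro ⟨h1, h2⟩; linarith
  unfold phi22 s22 s32 s12 s0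
  rw [if_neg h, if_neg h, if_neg h, if_neg h]
  have hπ := Real.pi_ne_zero
  field_simp
  ring

lemma phi2d_const {ε t : ℝ} (ht : ε < t) : phi2d ε t = 0 := by
  have h : ¬(0 ≤ t ∧ t ≤ ε) := by rintro ⟨h1, h2⟩; linarith
  unfold phi2d s22 s12 s0
  rw [if_neg h, if_neg h, if_neg h]
  simp

lemma c2_helper {f : ℝ → ℝ} {r : ℝ} (h : ContDiffAt ℝ 2 f r) :
    HasDerivAt (deriv f) (deriv (deriv f) r) r ∧ ContinuousAt (deriv f) r := by
  obtain ⟨u, hu, hcd⟩ := h.contDiffOn (le_refl 2) (by simp)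
  obtain ⟨t, htu, hto, hxt⟩ := mem_nhds_iff.1 hu
  have h2 : ContDiffOn ℝ 2 f t := hcd.mono htu
  have hd : ContDiffOn ℝ 1 (deriv f) t := h2.deriv_of_isOpen hto (by norm_num)
  have hdiff : DifferentiableAt ℝ (deriv f) r :=
    (hd.contDiffAt (hto.mem_nhds hxt)).differentiableAt (by norm_num)
  exact ⟨hdiff.hasDerivAt, hdiff.continuousAt⟩

/-- restriction of `F` to the real axis -/
noncomputable def radf (F : ℂ → ℝ) : ℝ → ℝ := fun t => F (pol t 0)

lemma radf_eq (F : ℂ → ℝ) : radf F = fun t : ℝ => F ((t : ℂ)) := by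
  funext t
  unfold radf pol
  norm_num

lemma radf_contDiffAt {F : ℂ → ℝ} (hF : ContDiffOn ℝ 2 F (Metric.closedBall 0 1))
    {r : ℝ} (hr : |r| < 1) : ContDiffAt ℝ 2 (radf F) r := by
  rw [radf_eq]
  have hball : ((r : ℂ)) ∈ Metric.ball (0:ℂ) 1 := by
    simpa [Metric.mem_ball, Complex.norm_real] using hr
  have hnb : Metric.closedBall (0:ℂ) 1 ∈ nhds ((r:ℂ)) :=
    Filter.mem_of_superset (Metric.isOpen_ball.mem_nhds hball) Metric.ball_subset_closedBall
  exact (hF.contDiffAt hnb).comp r Complex.ofRealCLM.contDiff.contDiffAt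

end MainAux

theorem stmt18 :
    ∃ ε₀ > (0:ℝ), ∀ ε : ℝ, 0 < ε → ε ≤ ε₀ →
      ∀ (lam : ℝ), 0 ≤ lam → ∀ (ν : ℕ) (F : ℂ → ℝ) (v v' : ℝ → ℝ),
        IsDiscSol ε lam F →
        (∀ r ∈ Ioc (0:ℝ) 1, ∀ θ : ℝ, F (pol r θ) = v r * Real.cos (ν*θ)) →
        (∀ r ∈ Ioc (0:ℝ) 1, HasDerivAt v (v' r) r) →
        (∃ z ∈ Metric.closedBall (0:ℂ) 1, F z ≠ 0) →
        besselJ ν (Real.sqrt (8*lam) * (1-ε)) * v' (1-ε) -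
          Real.sqrt (8*lam) * deriv (besselJ ν) (Real.sqrt (8*lam) * (1-ε)) * v (1-ε) = 0 := by
  refine ⟨1/2, by norm_num, ?_⟩
  intro ε hε hε2 lam hlam ν F v v' hF hFv hv _
  obtain ⟨hF2, hPDE⟩ := hF
  set x := Real.sqrt (8*lam) with hxdef
  have hx2 : x^2 = 8*lam := Real.sq_sqrt (by linarith)
  have h0lt : (0:ℝ) < 1-ε := by linarith
  have h1lt : (1:ℝ)-ε < 1 := by linarith
  -- the radial restriction
  set f : ℝ → ℝ := radf F with hfdef
  have hfc2 : ∀ r : ℝ, |r| < 1 → ContDiffAt ℝ 2 f r := fun r hr => radf_contDiffAt hF2 hr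
  -- relation between v and f
  have hvf : ∀ r ∈ Ioc (0:ℝ) 1, v r = f r := by
    intro r hr
    have h := hFv r hr 0
    simp only [mul_zero, Real.cos_zero, mul_one] at h
    rw [hfdef]
    unfold radf
    exact h.symm
  have hv'f : ∀ r ∈ Ioo (0:ℝ) 1, v' r = deriv f r := by
    intro r hr
    have hev : f =ᶠ[nhds r] v := by
      filter_upwards [Ioo_mem_nhds hr.1 hr.2] with t ht
      exact (hvf t (Ioo_subset_Ioc_self ht)).symm
    exact (((hv r (Ioo_subset_Ioc_self hr)).congr_of_eventuallyEq hev).deriv).symm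
  have habs : ∀ r : ℝ, r ∈ Ioo (0:ℝ) 1 → |r| < 1 := fun r hr =>
    abs_lt.2 ⟨by linarith [hr.1], hr.2⟩
  -- v' differentiable
  have hv' : ∀ r ∈ Ioo (0:ℝ) 1, HasDerivAt v' (deriv (deriv f) r) r := by
    intro r hr
    obtain ⟨hD, _⟩ := c2_helper (hfc2 r (habs r hr))
    apply hD.congr_of_eventuallyEq
    filter_upwards [Ioo_mem_nhds hr.1 hr.2] with t ht
    exact hv'f t ht
  have hv'cont : ∀ r ∈ Ioo (0:ℝ) 1, ContinuousAt v' r := by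
    intro r hr
    obtain ⟨_, hC⟩ := c2_helper (hfc2 r (habs r hr))
    apply hC.congr
    filter_upwards [Ioo_mem_nhds hr.1 hr.2] with t ht
    exact (hv'f t ht).symm
  -- partial derivative computations at θ = 0
  have hFr : ∀ r ∈ Ioo (0:ℝ) 1, Fr F r 0 = v' r := by
    intro r hr
    have : Fr F r 0 = deriv f r := rfl
    rw [this, hv'f r hr]
  have hFrr : ∀ r : ℝ, Frr F r 0 = deriv (deriv f) r := fun r => rfl
  have hFtt : ∀ r ∈ Ioc (0:ℝ) 1, Ftt F r 0 = -(ν:ℝ)^2 * v r := by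
    intro r hr
    unfold Ftt
    have hfun : (fun s : ℝ => F (pol r s)) = fun s => v r * Real.cos (ν*s) :=
      funext fun s => hFv r hr s
    rw [hfun]
    have hsc : ∀ s : ℝ, HasDerivAt (fun s : ℝ => (ν:ℝ)*s) (ν:ℝ) s := by
      intro s
      simpa using (hasDerivAt_id s).const_mul (ν:ℝ)
    have h1 : deriv (fun s : ℝ => v r * Real.cos (ν*s))
        = fun s : ℝ => (-(v r)*ν) * Real.sin ((ν:ℝ)*s) := by
      funext s
      rw [((hsc s).cos.const_mul (v r)).deriv]
      ring
    rw [h1]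
    rw [((hsc 0).sin.const_mul (-(v r)*ν)).deriv]
    norm_num
    ring
  -- the radial ODE
  have hODE : ∀ r ∈ Ioo (0:ℝ) (1-ε),
      r^3 * deriv (deriv f) r = -8*lam*r^3*v r - r^2*v' r + (ν:ℝ)^2*r*v r := by
    intro r hr
    have hroo : r ∈ Ioo (0:ℝ) 1 := ⟨hr.1, lt_trans hr.2 h1lt⟩
    have hr1 : r ∈ Ioc (0:ℝ) 1 := ⟨hr.1, hroo.2.le⟩
    have hE := hPDE r hr1 0
    have hFp : F (pol r 0) = v r := by
      have h := hFv r hr1 0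
      simpa using h
    have ht : ε < 1 - r := by linarith [hr.2]
    rw [hFr r hroo, hFtt r hr1, hFrr r, hFp, phi11_const ht, phi22_const ht,
      phi2d_const ht] at hE
    have hrne : r ≠ 0 := ne_of_gt hr.1
    field_simp at hE
    linear_combination (-r) * hE
  -- Bessel comparison functions
  have hscale : ∀ r : ℝ, HasDerivAt (fun y : ℝ => x*y) x r := by
    intro r
    simpa using (hasDerivAt_id r).const_mul x
  have hU : ∀ r : ℝ, HasDerivAt (fun y => besselJ ν (x*y)) (BesselAux.J1 ν (x*r) * x) r :=
    fun r => (BesselAux.besselJ_hasDerivAt ν (x*r)).comp r (hscale r)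
  have hU1 : ∀ r : ℝ, HasDerivAt (fun y => BesselAux.J1 ν (x*y) * x)
      (BesselAux.J2 ν (x*r) * x * x) r :=
    fun r => ((BesselAux.J1_hasDerivAt ν (x*r)).comp r (hscale r)).mul_const x
  -- the Wronskian
  set W : ℝ → ℝ := fun r => r * (besselJ ν (x*r) * v' r - (BesselAux.J1 ν (x*r) * x) * v r)
    with hWdef
  have hWderiv : ∀ r ∈ Ioo (0:ℝ) (1-ε), HasDerivAt W 0 r := by
    intro r hr
    have hroo : r ∈ Ioo (0:ℝ) 1 := ⟨hr.1, lt_trans hr.2 h1lt⟩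
    have h1 : HasDerivAt W
        (1 * (besselJ ν (x*r) * v' r - (BesselAux.J1 ν (x*r) * x) * v r)
          + r * (((BesselAux.J1 ν (x*r) * x) * v' r + besselJ ν (x*r) * deriv (deriv f) r)
            - ((BesselAux.J2 ν (x*r) * x * x) * v r + (BesselAux.J1 ν (x*r) * x) * v' r))) r :=
      (hasDerivAt_id r).mul (((hU r).mul (hv' r hroo)).sub
        ((hU1 r).mul (hv r (Ioo_subset_Ioc_self hroo))))
    convert h1 using 1
    have hB := BesselAux.besselJ_ode ν (x*r)
    have hO := hODE r hr
    have hrne : r ≠ 0 := ne_of_gt hr.1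
    have key : r^2 * (1 * (besselJ ν (x*r) * v' r - (BesselAux.J1 ν (x*r) * x) * v r)
          + r * (((BesselAux.J1 ν (x*r) * x) * v' r + besselJ ν (x*r) * deriv (deriv f) r)
            - ((BesselAux.J2 ν (x*r) * x * x) * v r + (BesselAux.J1 ν (x*r) * x) * v' r))) = 0 := by
      linear_combination (besselJ ν (x*r)) * hO - (r * v r) * hB
        + (r^3 * besselJ ν (x*r) * v r) * hx2
    have := (mul_eq_zero.1 key).resolve_left (pow_ne_zero 2 hrne)
    linarith [this]
  have hWcont : ∀ r ∈ Ioo (0:ℝ) 1, ContinuousAt W r := by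
    intro r hr
    exact continuousAt_id.mul ((((hU r).continuousAt).mul (hv'cont r hr)).sub
      (((hU1 r).continuousAt).mul (hv r (Ioo_subset_Ioc_self hr)).continuousAt))
  have hconst : ∀ a ∈ Ioo (0:ℝ) (1-ε), W a = W (1-ε) := by
    intro a ha
    have hcont : ContinuousOn W (Icc a (1-ε)) := by
      intro y hy
      exact (hWcont y ⟨lt_of_lt_of_le ha.1 hy.1, lt_of_le_of_lt hy.2 h1lt⟩).continuousWithinAt
    have hder : ∀ y ∈ Ico a (1-ε), HasDerivWithinAt W 0 (Ici y) y := fun y hy =>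
      (hWderiv y ⟨lt_of_lt_of_le ha.1 hy.1, hy.2⟩).hasDerivWithinAt
    exact (constant_of_has_deriv_right_zero hcont hder (1-ε) (right_mem_Icc.2 ha.2.le)).symm
  -- limit of W at 0⁺
  have hW0 : Filter.Tendsto W (nhdsWithin 0 (Ioi 0)) (nhds 0) := by
    have hc0 := hfc2 0 (by norm_num)
    obtain ⟨_, hdf⟩ := c2_helper hc0
    have hfc : ContinuousAt f 0 := hc0.continuousAt
    have hHcont : ContinuousAt
        (fun r => r * (besselJ ν (x*r) * deriv f r - (BesselAux.J1 ν (x*r) * x) * f r)) 0 :=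
      continuousAt_id.mul ((((hU 0).continuousAt).mul hdf).sub
        (((hU1 0).continuousAt).mul hfc))
    have hlim : Filter.Tendsto
        (fun r => r * (besselJ ν (x*r) * deriv f r - (BesselAux.J1 ν (x*r) * x) * f r))
        (nhdsWithin 0 (Ioi 0)) (nhds 0) := by
      have h := hHcont.tendsto.mono_left (nhdsWithin_le_nhds (s := Ioi (0:ℝ)))
      simpa using h
    apply hlim.congr'
    filter_upwards [Ioo_mem_nhdsGT_of_mem (left_mem_Ico.2 one_pos)] with t ht
    rw [hWdef]
    dsimp only
    rw [hv'f t ht, hvf t (Ioo_subset_Ioc_self ht)]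
  have hWconst0 : Filter.Tendsto W (nhdsWithin 0 (Ioi 0)) (nhds (W (1-ε))) := by
    apply Filter.Tendsto.congr' _ tendsto_const_nhds
    filter_upwards [Ioo_mem_nhdsGT_of_mem (left_mem_Ico.2 h0lt)] with t ht
    exact (hconst t ht).symm
  have hWzero : W (1-ε) = 0 := tendsto_nhds_unique hWconst0 hW0
  have h1ne : (1:ℝ)-ε ≠ 0 := ne_of_gt h0lt
  have hinner : besselJ ν (x*(1-ε)) * v' (1-ε)
      - (BesselAux.J1 ν (x*(1-ε)) * x) * v (1-ε) = 0 := by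
    have := hWzero
    rw [hWdef] at this
    dsimp only at this
    exact (mul_eq_zero.1 this).resolve_left h1ne
  rw [BesselAux.deriv_besselJ]
  linear_combination hinner
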